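/- arXiv:2604.05606 — 3 statements merged into one kernel-verified Lean document; each statement's English description precedes it below -/
import Mathlib

section
/- Let U be a finite set with |U| = n ≥ 2, and let U_1 ⊇ U_2 ⊇ ... ⊇ U_m be nested nonempty subsets of U. For each i ∈ [m], let S_i ⊆ U_i, and assume every element u ∈ U belongs to at most two of the sets S_i. Then the sum over i of |S_i|/|U_i| is at most 2·(harmonic number H_n) = O(log n). -/
open Finset

lemma tele (a n : ℕ) (han : a ≤ n) :
    ∑ j ∈ Finset.Ico a n, ((1:ℝ)/(j:ℝ) - 1/((j:ℝ)+1)) = 1/(a:ℝ) - 1/(n:ℝ) := by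
  rw [Finset.sum_Ico_eq_sum_range]
  have := Finset.sum_range_sub' (f := fun i => (1:ℝ)/((a+i : ℕ):ℝ)) (n := n - a)
  simp only [Nat.cast_add] at this ⊢
  have h2 : ((a : ℕ) + (n - a : ℕ) : ℕ) = n := by omega
  calc ∑ i ∈ Finset.range (n-a), ((1:ℝ)/((a:ℝ)+(i:ℝ)) - 1/(((a:ℝ)+(i:ℝ))+1))
      = ∑ i ∈ Finset.range (n-a), ((1:ℝ)/(((a+i:ℕ)):ℝ) - 1/(((a+(i+1):ℕ)):ℝ)) := by
        apply Finset.sum_congr rfl; intro i _; push_cast; ring_nf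
    _ = 1/(((a+0:ℕ)):ℝ) - 1/(((a+(n-a):ℕ)):ℝ) :=
        Finset.sum_range_sub' (f := fun i => (1:ℝ)/((a+i : ℕ):ℝ)) (n := n - a)
    _ = 1/(a:ℝ) - 1/(n:ℝ) := by rw [h2]; norm_num

lemma key (n : ℕ) (hn : 1 ≤ n) {α : Type*} [DecidableEq α] (A : Finset α) (f : α → ℕ)
    (hf1 : ∀ u ∈ A, 1 ≤ f u) (hfn : ∀ u ∈ A, f u ≤ n)
    (hcount : ∀ k, (A.filter (fun u => f u ≤ k)).card ≤ k) :
    ∑ u ∈ A, (1:ℝ)/(f u : ℝ) ≤ ∑ j ∈ Finset.Icc 1 n, (1:ℝ)/(j:ℝ) := by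
  have step1 : ∀ u ∈ A, (1:ℝ)/(f u : ℝ)
      = (∑ j ∈ Finset.Ico 1 n, if f u ≤ j then ((1:ℝ)/(j:ℝ) - 1/((j:ℝ)+1)) else 0) + 1/(n:ℝ) := by
    intro u hu
    have h1 : (Finset.Ico 1 n).filter (fun j => f u ≤ j) = Finset.Ico (f u) n := by
      ext j; simp only [Finset.mem_filter, Finset.mem_Ico]
      constructor
      · rintro ⟨⟨_, h⟩, h2⟩; exact ⟨h2, h⟩
      · rintro ⟨h2, h⟩; exact ⟨⟨le_trans (hf1 u hu) h2, h⟩, h2⟩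
    rw [← Finset.sum_filter, h1, tele (f u) n (hfn u hu)]
    ring
  rw [Finset.sum_congr rfl step1, Finset.sum_add_distrib, Finset.sum_comm]
  have hA : A.card ≤ n := by
    have := hcount n
    rwa [Finset.filter_true_of_mem hfn] at this
  have hmain : ∑ j ∈ Finset.Ico 1 n, ∑ u ∈ A, (if f u ≤ j then ((1:ℝ)/(j:ℝ) - 1/((j:ℝ)+1)) else 0)
      ≤ ∑ j ∈ Finset.Ico 1 n, (1:ℝ)/((j:ℝ)+1) := by
    apply Finset.sum_le_sum
    intro j hj
    rw [Finset.mem_Ico] at hj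
    have hjpos : (0:ℝ) < (j:ℝ) := by exact_mod_cast hj.1
    rw [← Finset.sum_filter, Finset.sum_const, nsmul_eq_mul]
    have hd : (0:ℝ) ≤ (1:ℝ)/(j:ℝ) - 1/((j:ℝ)+1) := by
      rw [sub_nonneg]; apply one_div_le_one_div_of_le hjpos; linarith
    calc ((A.filter (fun u => f u ≤ j)).card : ℝ) * ((1:ℝ)/(j:ℝ) - 1/((j:ℝ)+1))
        ≤ (j:ℝ) * ((1:ℝ)/(j:ℝ) - 1/((j:ℝ)+1)) := by
          apply mul_le_mul_of_nonneg_right _ hd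
          exact_mod_cast hcount j
      _ = (1:ℝ)/((j:ℝ)+1) := by field_simp; ring
  have hrest : ∑ _u ∈ A, (1:ℝ)/(n:ℝ) ≤ 1 := by
    rw [Finset.sum_const, nsmul_eq_mul]
    have hnpos : (0:ℝ) < (n:ℝ) := by exact_mod_cast hn
    rw [div_eq_mul_inv, one_mul, ← div_eq_mul_inv, div_le_one hnpos]
    exact_mod_cast hA
  have hfin : ∑ j ∈ Finset.Ico 1 n, (1:ℝ)/((j:ℝ)+1) + 1 = ∑ j ∈ Finset.Icc 1 n, (1:ℝ)/(j:ℝ) := by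
    have h1 : Finset.Icc 1 n = Finset.Ico 1 (n+1) := by rfl
    rw [h1, Finset.sum_eq_sum_Ico_succ_bot (by omega : 1 < n + 1)]
    rw [Finset.sum_Ico_eq_sum_range, Finset.sum_Ico_eq_sum_range]
    have : n + 1 - (1+1) = n - 1 := by omega
    rw [this]
    push_cast
    rw [add_comm]
    congr 1
    · norm_num
    · apply Finset.sum_congr rfl
      intro x _
      ring_nf
  linarith [add_le_add hmain hrest]

/-- For a nested chain of nonempty subsets `Us 0 ⊇ Us 1 ⊇ …` of a finite
set of size `n ≥ 2`, with `Ss i ⊆ Us i` and every element appearing in at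
most two of the `Ss i`, the sum of `|Ss i| / |Us i|` is at most twice the
`n`-th harmonic number. -/
theorem stmt_1 {α : Type*} [Fintype α] [DecidableEq α] (n m : ℕ)
    (hn : 2 ≤ n) (hcard : Fintype.card α = n)
    (Us Ss : Fin m → Finset α)
    (hnested : ∀ i j : Fin m, i ≤ j → Us j ⊆ Us i)
    (hne : ∀ i, (Us i).Nonempty)
    (hsub : ∀ i, Ss i ⊆ Us i)
    (htwo : ∀ u : α, (Finset.univ.filter (fun i => u ∈ Ss i)).card ≤ 2) :
    ∑ i, ((Ss i).card : ℝ) / ((Us i).card : ℝ)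
      ≤ 2 * ∑ j ∈ Finset.Icc 1 n, (1 : ℝ) / (j : ℝ) := by
  classical
  set T : α → Finset (Fin m) := fun u => Finset.univ.filter (fun i => u ∈ Us i) with hT
  set f : α → ℕ := fun u =>
    if h : (T u).Nonempty then (T u).inf' h (fun i => (Us i).card) else 1 with hf
  set A : Finset α := Finset.univ.filter (fun u => ∃ i, u ∈ Ss i) with hAdef
  -- basic facts about f on A
  have hTne : ∀ u ∈ A, (T u).Nonempty := by
    intro u hu
    rw [hAdef, Finset.mem_filter] at hu
    obtain ⟨i, hi⟩ := hu.2
    exact ⟨i, by simp [hT, hsub i hi]⟩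
  have hf_le : ∀ u ∈ A, ∀ i, u ∈ Us i → f u ≤ (Us i).card := by
    intro u hu i hi
    rw [hf]; simp only [dif_pos (hTne u hu)]
    exact Finset.inf'_le _ (by simp [hT, hi])
  have hf_wit : ∀ u ∈ A, ∃ i, u ∈ Us i ∧ f u = (Us i).card := by
    intro u hu
    rw [hf]; simp only [dif_pos (hTne u hu)]
    obtain ⟨i, hi, heq⟩ := Finset.exists_mem_eq_inf' (hTne u hu) (fun i => (Us i).card)
    rw [hT, Finset.mem_filter] at hi
    exact ⟨i, hi.2, heq⟩
  have hf1 : ∀ u ∈ A, 1 ≤ f u := by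
    intro u hu
    obtain ⟨i, hi, heq⟩ := hf_wit u hu
    rw [heq]; exact Finset.card_pos.mpr ⟨u, hi⟩
  have hfn : ∀ u ∈ A, f u ≤ n := by
    intro u hu
    obtain ⟨i, _, heq⟩ := hf_wit u hu
    rw [heq, ← hcard]
    exact Finset.card_le_card (Finset.subset_univ _) |>.trans_eq (by simp)
  have hcount : ∀ k, (A.filter (fun u => f u ≤ k)).card ≤ k := by
    intro k
    by_cases hB : (A.filter (fun u => f u ≤ k)).Nonempty
    · obtain ⟨u0, hu0⟩ := hB
      rw [Finset.mem_filter] at hu0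
      obtain ⟨i0w, hi0w, heq0⟩ := hf_wit u0 hu0.1
      set J : Finset (Fin m) := Finset.univ.filter (fun i => (Us i).card ≤ k) with hJ
      have hJne : J.Nonempty := ⟨i0w, by simp [hJ, heq0 ▸ hu0.2]⟩
      set i0 := J.min' hJne with hi0
      have hi0J : i0 ∈ J := J.min'_mem hJne
      have hsubU : (A.filter (fun u => f u ≤ k)) ⊆ Us i0 := by
        intro v hv
        rw [Finset.mem_filter] at hv
        obtain ⟨iv, hiv, heqv⟩ := hf_wit v hv.1
        have hivJ : iv ∈ J := by simp [hJ, heqv ▸ hv.2]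
        have : i0 ≤ iv := J.min'_le iv hivJ
        exact hnested i0 iv this hiv
      calc (A.filter (fun u => f u ≤ k)).card ≤ (Us i0).card := Finset.card_le_card hsubU
        _ ≤ k := by rw [hJ] at hi0J; simpa using hi0J
    · rw [Finset.not_nonempty_iff_eq_empty] at hB
      simp [hB]
  -- rewrite LHS
  have hstep : ∑ i, ((Ss i).card : ℝ) / ((Us i).card : ℝ)
      = ∑ u ∈ A, ∑ i ∈ Finset.univ.filter (fun i => u ∈ Ss i), (1:ℝ)/((Us i).card:ℝ) := by
    have h1 : ∀ i : Fin m, ((Ss i).card : ℝ) / ((Us i).card : ℝ)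
        = ∑ u ∈ Ss i, (1:ℝ)/((Us i).card:ℝ) := by
      intro i; rw [Finset.sum_const, nsmul_eq_mul]; ring
    rw [Finset.sum_congr rfl (fun i _ => h1 i)]
    have h2 : ∀ i : Fin m, ∑ u ∈ Ss i, (1:ℝ)/((Us i).card:ℝ)
        = ∑ u : α, if u ∈ Ss i then (1:ℝ)/((Us i).card:ℝ) else 0 := by
      intro i; rw [← Finset.sum_filter, Finset.filter_univ_mem]
    rw [Finset.sum_congr rfl (fun i _ => h2 i), Finset.sum_comm]
    rw [← Finset.sum_subset (A.subset_univ)]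
    · apply Finset.sum_congr rfl
      intro u _
      rw [← Finset.sum_filter]
    · intro u _ hu
      rw [hAdef, Finset.mem_filter, not_and] at hu
      have : ∀ i : Fin m, u ∉ Ss i := by
        intro i hi; exact (hu (Finset.mem_univ u)) ⟨i, hi⟩
      simp [this]
  rw [hstep]
  have hbound : ∑ u ∈ A, ∑ i ∈ Finset.univ.filter (fun i => u ∈ Ss i), (1:ℝ)/((Us i).card:ℝ)
      ≤ ∑ u ∈ A, 2 * ((1:ℝ)/(f u : ℝ)) := by
    apply Finset.sum_le_sum
    intro u hu
    have hfpos : (0:ℝ) < (f u : ℝ) := by exact_mod_cast hf1 u hu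
    calc ∑ i ∈ Finset.univ.filter (fun i => u ∈ Ss i), (1:ℝ)/((Us i).card:ℝ)
        ≤ ∑ i ∈ Finset.univ.filter (fun i => u ∈ Ss i), (1:ℝ)/(f u : ℝ) := by
          apply Finset.sum_le_sum
          intro i hi
          rw [Finset.mem_filter] at hi
          apply one_div_le_one_div_of_le hfpos
          exact_mod_cast hf_le u hu i (hsub i hi.2)
      _ = ((Finset.univ.filter (fun i => u ∈ Ss i)).card : ℝ) * ((1:ℝ)/(f u : ℝ)) := by
          rw [Finset.sum_const, nsmul_eq_mul]
      _ ≤ 2 * ((1:ℝ)/(f u : ℝ)) := by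
          apply mul_le_mul_of_nonneg_right _ (by positivity)
          exact_mod_cast htwo u
  calc ∑ u ∈ A, ∑ i ∈ Finset.univ.filter (fun i => u ∈ Ss i), (1:ℝ)/((Us i).card:ℝ)
      ≤ ∑ u ∈ A, 2 * ((1:ℝ)/(f u : ℝ)) := hbound
    _ = 2 * ∑ u ∈ A, (1:ℝ)/(f u : ℝ) := by rw [Finset.mul_sum]
    _ ≤ 2 * ∑ j ∈ Finset.Icc 1 n, (1 : ℝ) / (j : ℝ) := by
        apply mul_le_mul_of_nonneg_left _ (by norm_num)
        exact key n (by omega) A f hf1 hfn hcount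
end

section
/- Under landmark resampling, at any time T the individual realizations of all objects come from at most O(log T) distinct time steps, and this set of possible time steps depends only on T. Formally: any resample schedule t_0 < t_1 < ... with t_i = t_{i-1} + 2^i + x_i where x_i ∈ [0, 2^i] maximizes trailing binary zeros of t_i, has the property that for each i, t_i is divisible by 2^i and t_i ∈ [T - 2^{i+3}, T] whenever the object's current realization at time T came from its i-th resample; since each interval [T - 2^{i+3}, T] contains at most 8 multiples of 2^i and i ≤ log_2 T, the total number of possible origin times is at most 8·log_2 T + O(1). -/
/-- The set of possible origin times at time `T` under landmark resampling:
times `s ≤ T` that are divisible by `2^i` for some `i ≤ log₂ T` with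
`T < s + 2^(i+3)`.  It depends only on `T`. -/
def landmarkSet (T : ℕ) : Set ℕ :=
  {s | s ≤ T ∧ ∃ i ≤ Nat.log 2 T, 2 ^ i ∣ s ∧ T < s + 2 ^ (i + 3)}

/-- Under landmark resampling (schedule `t (i+1) = t i + 2^(i+1) + x (i+1)`
with `x (i+1) ∈ [0, 2^(i+1)]` chosen so that `2^i ∣ t i`), the current origin
time of every object at time `T` lies in `landmarkSet T`, a set depending
only on `T` of size at most `8 * (log₂ T + 1)`. -/
theorem stmt_9 (T : ℕ) (hT : 1 ≤ T) :
    (∀ t x : ℕ → ℕ,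
        (∀ i, x (i + 1) ≤ 2 ^ (i + 1)) →
        (∀ i, t (i + 1) = t i + 2 ^ (i + 1) + x (i + 1)) →
        (∀ i, 2 ^ i ∣ t i) →
        ∀ i, t i ≤ T → T < t (i + 1) → t i ∈ landmarkSet T) ∧
    (landmarkSet T).ncard ≤ 8 * (Nat.log 2 T + 1) := by
  constructor
  · intro t x hx ht hdvd i hle hlt
    have hpow : (2:ℕ) ^ (i+2) = 2 ^ (i+1) + 2 ^ (i+1) := by ring
    have hpow3 : (2:ℕ) ^ (i+3) = 2 ^ (i+2) + 2 ^ (i+2) := by ring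
    have h2 : t (i+1) ≤ t i + 2 ^ (i+2) := by
      have := hx i
      rw [ht i]; omega
    by_cases h0 : t i = 0
    · refine ⟨by omega, Nat.log 2 T, le_refl _, by simp [h0], ?_⟩
      have h1 := Nat.lt_pow_succ_log_self (by norm_num : 1 < 2) T
      have h3 : (2:ℕ) ^ (Nat.log 2 T + 1) ≤ 2 ^ (Nat.log 2 T + 3) :=
        Nat.pow_le_pow_right (by norm_num) (by omega)
      omega
    · refine ⟨hle, i, ?_, hdvd i, by omega⟩
      have h1 : 2 ^ i ≤ t i := Nat.le_of_dvd (Nat.pos_of_ne_zero h0) (hdvd i)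
      exact (Nat.le_log_iff_pow_le (by norm_num) (by omega)).mpr (le_trans h1 hle)
  · have hsub : landmarkSet T ⊆
        ↑(((Finset.range (Nat.log 2 T + 1)) ×ˢ Finset.range 8).image
          (fun p => 2 ^ p.1 * (T / 2 ^ p.1 - 7 + p.2))) := by
      rintro s ⟨hsT, i, hi, ⟨m, rfl⟩, hlt⟩
      have hpos : 0 < (2:ℕ) ^ i := Nat.pow_pos (by norm_num)
      have hm1 : m ≤ T / 2 ^ i := (Nat.le_div_iff_mul_le hpos).mpr (by rw [mul_comm]; exact hsT)
      have hm2 : T / 2 ^ i < m + 8 := by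
        apply (Nat.div_lt_iff_lt_mul hpos).mpr
        have : (2:ℕ) ^ (i+3) = 2 ^ i * 8 := by ring
        nlinarith
      simp only [Finset.coe_image, Set.mem_image, Finset.mem_coe,
        Finset.mem_product, Finset.mem_range]
      refine ⟨(i, m - (T / 2 ^ i - 7)), ⟨by omega, by omega⟩, ?_⟩
      simp only
      congr 1
      omega
    calc (landmarkSet T).ncard ≤ _ :=
          Set.ncard_le_ncard hsub (Finset.finite_toSet _)
      _ ≤ 8 * (Nat.log 2 T + 1) := by
          rw [Set.ncard_coe_finset]
          refine le_trans (Finset.card_image_le) ?_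
          rw [Finset.card_product, Finset.card_range, Finset.card_range]
          omega
end

section
/- Let events X_{v_1}, ..., X_{v_k} be defined in a probability space and let Y = X_{v_1} ∨ ... ∨ X_{v_k}. Suppose for each i, P(X_{v_i} | ⋀_{j>i} ¬X_{v_j}) = p_i (conditional probabilities well-defined). Then P(Y) ≥ (∑_i p_i)·(1 - P(Y)); consequently, if ∑_i p_i ≥ 2 then P(Y) ≥ 1/2 — indeed if P(Y) < 1/2 then P(Y) ≥ (1/2)∑_i p_i ≥ 1, a contradiction, so P(Y) ≥ 1/2. -/
open MeasureTheory

/-- If `P(Xᵢ ∩ ⋂_{j>i} Xⱼᶜ) = pᵢ · P(⋂_{j>i} Xⱼᶜ)` for every `i`, then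
`P(Y) ≥ (∑ pᵢ)(1 - P(Y))` where `Y = ⋃ Xᵢ`; in particular if `∑ pᵢ ≥ 2`
then `P(Y) ≥ 1/2`. -/
theorem stmt_13 {Ω : Type*} [MeasurableSpace Ω] (μ : Measure Ω)
    [IsProbabilityMeasure μ]
    (k : ℕ) (X : Fin k → Set Ω) (p : Fin k → ℝ)
    (hmeas : ∀ i, MeasurableSet (X i))
    (hp0 : ∀ i, 0 ≤ p i)
    (hcond : ∀ i, (μ (X i ∩ ⋂ j, ⋂ (_ : i < j), (X j)ᶜ)).toReal
        = p i * (μ (⋂ j, ⋂ (_ : i < j), (X j)ᶜ)).toReal) :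
    ((∑ i, p i) * (1 - (μ (⋃ i, X i)).toReal) ≤ (μ (⋃ i, X i)).toReal) ∧
    (2 ≤ ∑ i, p i → (1 / 2 : ℝ) ≤ (μ (⋃ i, X i)).toReal) := by
  set Y := ⋃ i, X i with hY
  have hYm : MeasurableSet Y := MeasurableSet.iUnion hmeas
  set A : Fin k → Set Ω := fun i => X i ∩ ⋂ j, ⋂ (_ : i < j), (X j)ᶜ with hA
  have hAm : ∀ i, MeasurableSet (A i) := fun i =>
    (hmeas i).inter (MeasurableSet.iInter fun j =>
      MeasurableSet.iInter fun _ => (hmeas j).compl)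
  have hdisj : Pairwise (Function.onFun Disjoint A) := by
    have key : ∀ i j : Fin k, i < j → Disjoint (A i) (A j) := by
      intro i j h
      refine Set.disjoint_left.mpr ?_
      rintro x ⟨hxi, hxI⟩ ⟨hxj, -⟩
      exact (Set.mem_iInter.mp (Set.mem_iInter.mp hxI j) h) hxj
    intro i j hij
    rcases hij.lt_or_gt with h | h
    · exact key i j h
    · exact (key j i h).symm
  have hUnion : Y = ⋃ i, A i := by
    apply Set.Subset.antisymm
    · intro x hx
      obtain ⟨i, hxi⟩ := Set.mem_iUnion.mp hx
      classical
      set s := Finset.univ.filter (fun i => x ∈ X i) with hs_def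
      have hs : s.Nonempty := ⟨i, by simp [hs_def, hxi]⟩
      set m := s.max' hs with hm
      refine Set.mem_iUnion.mpr ⟨m, ?_, ?_⟩
      · have := s.max'_mem hs
        simpa [hs_def] using this
      · refine Set.mem_iInter.mpr fun j => Set.mem_iInter.mpr fun hj hxj => ?_
        have hjs : j ∈ s := by simp [hs_def, hxj]
        exact absurd (Finset.le_max' s j hjs) (not_le.mpr hj)
    · exact Set.iUnion_mono fun i => Set.inter_subset_left
  have hmeasEq : μ Y = ∑ i, μ (A i) := by
    rw [hUnion, measure_iUnion hdisj hAm, tsum_fintype]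
  have htoReal : (μ Y).toReal = ∑ i, (μ (A i)).toReal := by
    rw [hmeasEq, ENNReal.toReal_sum (fun i _ => measure_ne_top μ _)]
  have hle1 : (μ Y).toReal ≤ 1 := by
    have := prob_le_one (μ := μ) (s := Y)
    simpa using ENNReal.toReal_mono ENNReal.one_ne_top this
  have hsub : ∀ i : Fin k,
      (1 - (μ Y).toReal) ≤ (μ (⋂ j, ⋂ (_ : i < j), (X j)ᶜ)).toReal := by
    intro i
    have h1 : Yᶜ ⊆ ⋂ j, ⋂ (_ : i < j), (X j)ᶜ := by
      intro x hx
      exact Set.mem_iInter.mpr fun j => Set.mem_iInter.mpr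
        fun _ hxj => hx (Set.mem_iUnion.mpr ⟨j, hxj⟩)
    have h2 : μ Yᶜ ≤ μ (⋂ j, ⋂ (_ : i < j), (X j)ᶜ) := measure_mono h1
    have h3 : (μ Yᶜ).toReal = 1 - (μ Y).toReal := by
      rw [measure_compl hYm (measure_ne_top μ _), measure_univ,
        ENNReal.toReal_sub_of_le prob_le_one ENNReal.one_ne_top]
      simp
    rw [← h3]
    exact ENNReal.toReal_mono (measure_ne_top μ _) h2
  have hmain : (∑ i, p i) * (1 - (μ Y).toReal) ≤ (μ Y).toReal := by
    calc (∑ i, p i) * (1 - (μ Y).toReal)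
        = ∑ i, p i * (1 - (μ Y).toReal) := by rw [Finset.sum_mul]
      _ ≤ ∑ i, p i * (μ (⋂ j, ⋂ (_ : i < j), (X j)ᶜ)).toReal :=
          Finset.sum_le_sum fun i _ => mul_le_mul_of_nonneg_left (hsub i) (hp0 i)
      _ = ∑ i, (μ (A i)).toReal := by
          refine Finset.sum_congr rfl fun i _ => ?_
          rw [← hcond i]
      _ = (μ Y).toReal := htoReal.symm
  refine ⟨hmain, fun hS => ?_⟩
  nlinarith [hmain, hle1]
end
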